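/- For any integer b ≥ 2, the normalized Dirichlet kernel K_b(x) = sin(πbx)/(b sin(πx)) is decreasing and concave on the interval [0, 1/(2b−2)]. -/

import Mathlib

open Classical
noncomputable def Kb (b : ℕ) (x : ℝ) : ℝ :=
  if ∃ n : ℤ, x = n then (-1 : ℝ) ^ (⌊x⌋ * ((b : ℤ) - 1))
  else Real.sin (Real.pi * b * x) / (b * Real.sin (Real.pi * x))

open Real Finset

noncomputable def Sb (b : ℕ) (x : ℝ) : ℝ :=
  (1 / b) * ∑ j ∈ Finset.range b, Real.cos ((2 * j - b + 1) * (Real.pi * x))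

lemma key (b : ℕ) (θ : ℝ) :
    (∑ j ∈ Finset.range b, Real.cos ((2 * j - b + 1) * θ)) * Real.sin θ
      = Real.sin (b * θ) := by
  have h : ∀ j ∈ Finset.range b,
      Real.cos ((2 * j - b + 1) * θ) * Real.sin θ
        = Real.sin ((2 * (j+1 : ℕ) - b) * θ) / 2 - Real.sin ((2 * j - b) * θ) / 2 := by
    intro j _
    have h1 : ((2 * (j+1 : ℕ) : ℝ) - b) * θ = (2 * j - b + 1) * θ + θ := by
      push_cast; ring
    have h2 : ((2 * j : ℝ) - b) * θ = (2 * j - b + 1) * θ - θ := by ring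
    rw [h1, h2, Real.sin_add, Real.sin_sub]
    ring
  rw [Finset.sum_mul, Finset.sum_congr rfl h,
    Finset.sum_range_sub (fun j => Real.sin ((2 * j - b) * θ) / 2)]
  simp only [Nat.cast_zero, mul_zero, zero_sub, neg_mul, Real.sin_neg]
  have : ((2 * b : ℝ) - b) * θ = b * θ := by ring
  rw [this]; ring

lemma Kb_eq_Sb (b : ℕ) (hb : 2 ≤ b) :
    Set.EqOn (Kb b) (Sb b) (Set.Icc 0 (1 / (2 * (b : ℝ) - 2))) := by
  intro x hx
  obtain ⟨hx0, hx1⟩ := hx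
  have hb2 : (2 : ℝ) ≤ b := by exact_mod_cast hb
  have hden : (0 : ℝ) < 2 * b - 2 := by linarith
  have hxhalf : x ≤ 1 / 2 := by
    calc x ≤ 1 / (2 * b - 2) := hx1
    _ ≤ 1 / 2 := by apply one_div_le_one_div_of_le <;> linarith
  by_cases hint : ∃ n : ℤ, x = n
  · -- then x = 0
    obtain ⟨n, rfl⟩ := hint
    have hn : n = 0 := by
      have : (0:ℝ) ≤ n := hx0
      have h2 : (n:ℝ) ≤ 1/2 := hxhalf
      have h3 : (0:ℤ) ≤ n := by exact_mod_cast this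
      have h4 : (n:ℝ) < 1 := by linarith
      have h5 : n < 1 := by exact_mod_cast h4
      omega
    subst hn
    have hb0 : (b:ℝ) ≠ 0 := by positivity
    rw [Kb, if_pos ⟨0, by simp⟩]
    simp [Sb, hb0]
  · have hxpos : 0 < x := by
      rcases hx0.lt_or_eq with h | h
      · exact h
      · exact absurd ⟨0, by simp [← h]⟩ hint
    have hsin : 0 < Real.sin (Real.pi * x) := by
      apply Real.sin_pos_of_pos_of_lt_pi
      · positivity
      · nlinarith [Real.pi_pos]
    have hbpos : (0:ℝ) < b := by linarith
    have h : Real.pi * b * x = b * (Real.pi * x) := by ring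
    rw [Kb, if_neg hint, Sb, h, ← key b (Real.pi * x)]
    field_simp
    ring_nf
    exact Finset.sum_congr rfl fun i _ => by congr 1; ring

lemma absbd (b j : ℕ) (hb : 2 ≤ b) (hj : j < b) {x : ℝ} (hx0 : 0 ≤ x)
    (hx1 : x ≤ 1 / (2 * (b : ℝ) - 2)) :
    |((2 * j : ℝ) - b + 1) * (Real.pi * x)| ≤ Real.pi / 2 := by
  have hb2 : (2 : ℝ) ≤ b := by exact_mod_cast hb
  have hjb : (j : ℝ) ≤ b - 1 := by
    have : (j : ℝ) + 1 ≤ b := by exact_mod_cast hj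
    linarith
  have hj0 : (0 : ℝ) ≤ j := by positivity
  have habs : |(2 * (j:ℝ) - b + 1)| ≤ b - 1 := by
    rw [abs_le]; constructor <;> linarith
  have hpix : 0 ≤ Real.pi * x := by positivity
  rw [abs_mul, abs_of_nonneg hpix]
  have h1 : |(2 * (j:ℝ) - b + 1)| * (Real.pi * x) ≤ (b - 1) * (Real.pi * x) :=
    mul_le_mul_of_nonneg_right habs hpix
  have hden : (0 : ℝ) < 2 * b - 2 := by linarith
  have h2 : x * (2 * b - 2) ≤ 1 := by
    rw [← le_div_iff₀ hden] at *; exact hx1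
  nlinarith [Real.pi_pos]

lemma Sb_anti (b : ℕ) (hb : 2 ≤ b) :
    AntitoneOn (Sb b) (Set.Icc 0 (1 / (2 * (b : ℝ) - 2))) := by
  intro x hx y hy hxy
  unfold Sb
  have hbinv : (0:ℝ) ≤ 1 / b := by positivity
  apply mul_le_mul_of_nonneg_left _ hbinv
  apply Finset.sum_le_sum
  intro j hj
  have hj' := Finset.mem_range.mp hj
  have h1 := absbd b j hb hj' hx.1 hx.2
  have h2 := absbd b j hb hj' hy.1 hy.2
  rw [← Real.cos_abs (((2 * j : ℝ) - b + 1) * (Real.pi * x)),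
    ← Real.cos_abs (((2 * j : ℝ) - b + 1) * (Real.pi * y))]
  apply Real.cos_le_cos_of_nonneg_of_le_pi (abs_nonneg _)
  · linarith [Real.pi_pos]
  · rw [abs_mul ((2 * (j:ℝ)) - b + 1) (Real.pi * x),
      abs_mul ((2 * (j:ℝ)) - b + 1) (Real.pi * y),
      abs_of_nonneg (mul_nonneg Real.pi_pos.le hx.1),
      abs_of_nonneg (mul_nonneg Real.pi_pos.le hy.1)]
    have : Real.pi * x ≤ Real.pi * y := by nlinarith [Real.pi_pos]
    exact mul_le_mul_of_nonneg_left this (abs_nonneg _)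

lemma Sb_concave (b : ℕ) (hb : 2 ≤ b) :
    ConcaveOn ℝ (Set.Icc 0 (1 / (2 * (b : ℝ) - 2))) (Sb b) := by
  refine ⟨convex_Icc _ _, fun x hx y hy a c ha hc hac => ?_⟩
  simp only [Sb, smul_eq_mul]
  have key : ∀ j ∈ Finset.range b,
      a * Real.cos ((2 * j - b + 1) * (Real.pi * x))
        + c * Real.cos ((2 * j - b + 1) * (Real.pi * y))
        ≤ Real.cos ((2 * j - b + 1) * (Real.pi * (a * x + c * y))) := by
    intro j hj
    have hj' := Finset.mem_range.mp hj
    have h1 := abs_le.mp (absbd b j hb hj' hx.1 hx.2)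
    have h2 := abs_le.mp (absbd b j hb hj' hy.1 hy.2)
    have hcc := (strictConcaveOn_cos_Icc.concaveOn).2
      (Set.mem_Icc.mpr h1) (Set.mem_Icc.mpr h2) ha hc hac
    simp only [smul_eq_mul] at hcc
    have harg : a * ((2 * (j:ℝ) - b + 1) * (Real.pi * x))
        + c * ((2 * (j:ℝ) - b + 1) * (Real.pi * y))
        = (2 * (j:ℝ) - b + 1) * (Real.pi * (a * x + c * y)) := by ring
    rw [harg] at hcc
    exact hcc
  have hsum := Finset.sum_le_sum key
  rw [Finset.sum_add_distrib, ← Finset.mul_sum, ← Finset.mul_sum] at hsum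
  have hbinv : (0:ℝ) ≤ 1 / b := by positivity
  nlinarith [mul_le_mul_of_nonneg_left hsum hbinv]

theorem stmt7 (b : ℕ) (hb : 2 ≤ b) :
    AntitoneOn (Kb b) (Set.Icc 0 (1 / (2 * (b : ℝ) - 2))) ∧
      ConcaveOn ℝ (Set.Icc 0 (1 / (2 * (b : ℝ) - 2))) (Kb b) := by
  have heq := Kb_eq_Sb b hb
  constructor
  · intro x hx y hy hxy
    rw [heq hx, heq hy]
    exact Sb_anti b hb hx hy hxy
  · refine ⟨convex_Icc _ _, fun x hx y hy a c ha hc hac => ?_⟩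
    have hmem := (convex_Icc _ _) hx hy ha hc hac
    rw [heq hx, heq hy, heq hmem]
    exact (Sb_concave b hb).2 hx hy ha hc hac
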